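/- Let w = e_1, t_y ∈ [0, 1/(2√d)], y = t_y e_1 + √(1−t_y²) e_2, z = −√(1−t_y²) e_1 + t_y e_2, and t ∈ [−1, 1/2]. If v ∈ S^{d-1} satisfies ⟨v,y⟩ = t and ⟨v,z⟩/√(1−t²) ≥ 1/(2√d), then ⟨v,w⟩ < 0. -/
import Mathlib

set_option maxHeartbeats 1000000


open scoped RealInnerProductSpace

/-- Geometric lemma on the sphere: with `w = e₁`, `t_y ∈ [0, 1/(2√d)]`,
`y = t_y e₁ + √(1−t_y²) e₂`, `z = −√(1−t_y²) e₁ + t_y e₂` and `t ∈ [−1, 1/2]`, any unit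
vector `v` with `⟨v,y⟩ = t` and `⟨v,z⟩/√(1−t²) ≥ 1/(2√d)` satisfies `⟨v,w⟩ < 0`. -/
theorem stmt14 (d : ℕ) (hd : 3 ≤ d)
    (t_y t : ℝ)
    (hty : t_y ∈ Set.Icc (0 : ℝ) (1 / (2 * Real.sqrt d)))
    (ht : t ∈ Set.Icc (-1 : ℝ) (1 / 2))
    (w y z v : EuclideanSpace ℝ (Fin d))
    (hw : w = EuclideanSpace.single (⟨0, by omega⟩ : Fin d) (1 : ℝ))
    (hy : y = t_y • EuclideanSpace.single (⟨0, by omega⟩ : Fin d) (1 : ℝ)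
        + Real.sqrt (1 - t_y ^ 2) • EuclideanSpace.single (⟨1, by omega⟩ : Fin d) (1 : ℝ))
    (hz : z = (-Real.sqrt (1 - t_y ^ 2)) • EuclideanSpace.single (⟨0, by omega⟩ : Fin d) (1 : ℝ)
        + t_y • EuclideanSpace.single (⟨1, by omega⟩ : Fin d) (1 : ℝ))
    (hv : ‖v‖ = 1) (hvy : ⟪v, y⟫ = t)
    (hvz : 1 / (2 * Real.sqrt d) ≤ ⟪v, z⟫ / Real.sqrt (1 - t ^ 2)) :
    ⟪v, w⟫ < 0 := by
  obtain ⟨hty0, hty1⟩ := hty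
  obtain ⟨ht1, ht2⟩ := ht
  have hd3 : (3:ℝ) ≤ (d:ℝ) := by exact_mod_cast hd
  have hD : (0:ℝ) < Real.sqrt d := Real.sqrt_pos.2 (by linarith)
  have hD1 : (1:ℝ) ≤ Real.sqrt d := by
    rw [show (1:ℝ) = Real.sqrt 1 from (Real.sqrt_one).symm]
    exact Real.sqrt_le_sqrt (by linarith)
  have hDsq : Real.sqrt d ^ 2 = d := Real.sq_sqrt (by positivity)
  have hty_half : t_y ≤ 1/2 := by
    calc t_y ≤ 1 / (2 * Real.sqrt d) := hty1
    _ ≤ 1/2 := by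
      rw [div_le_div_iff₀ (by positivity) (by norm_num)]; nlinarith
  have htysq : t_y ^ 2 ≤ 1 / (4 * d) := by
    have : t_y ^ 2 ≤ (1 / (2 * Real.sqrt d)) ^ 2 := by nlinarith
    calc t_y ^ 2 ≤ (1 / (2 * Real.sqrt d)) ^ 2 := this
    _ = 1 / (4 * d) := by
      have h4 : (2 * Real.sqrt d) ^ 2 = 4 * d := by rw [mul_pow, hDsq]; ring
      rw [div_pow, h4]; norm_num
  have htysq' : t_y ^ 2 ≤ 1 / 12 := by
    refine htysq.trans ?_
    rw [div_le_div_iff₀ (by positivity) (by norm_num)]; linarith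
  set s := Real.sqrt (1 - t_y ^ 2) with hs
  have hs2 : s ^ 2 = 1 - t_y ^ 2 := Real.sq_sqrt (by nlinarith)
  have hspos : 0 < s := Real.sqrt_pos.2 (by nlinarith)
  -- t > -1
  have ht1' : -1 < t := by
    by_contra h
    push_neg at h
    have ht1 : t = -1 := le_antisymm h ht1
    rw [ht1] at hvz
    norm_num at hvz
    have h2 : (0:ℝ) < (Real.sqrt d)⁻¹ * (1 / 2) := by positivity
    linarith
  have hT0 : 0 < 1 - t ^ 2 := by
    have e : 1 - t ^ 2 = (1 - t) * (1 + t) := by ring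
    rw [e]
    exact mul_pos (by linarith) (by linarith)
  set sT := Real.sqrt (1 - t ^ 2) with hsT
  have hT2 : sT ^ 2 = 1 - t ^ 2 := Real.sq_sqrt hT0.le
  have hTpos : 0 < sT := Real.sqrt_pos.2 hT0
  -- compute inner products
  have key0 : (1:ℝ) = 1 := rfl
  rw [hy] at hvy
  rw [hz] at hvz
  rw [hw]
  simp only [inner_add_right, inner_smul_right, EuclideanSpace.inner_single_right,
    RCLike.inner_apply, map_one, one_mul, starRingEnd_apply, star_trivial] at hvy hvz ⊢
  set a := v (⟨0, by omega⟩ : Fin d) with ha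
  set b := v (⟨1, by omega⟩ : Fin d) with hb
  -- hvy : t_y * a + s * b = t ; hvz : 1/(2√d) ≤ (-s * a + t_y * b)/sT
  have hP : sT / (2 * Real.sqrt d) ≤ -s * a + t_y * b := by
    rw [div_le_iff₀ (by positivity)]
    rw [div_le_div_iff₀ (by positivity) hTpos] at hvz
    linarith
  have hPpos : 0 < -s * a + t_y * b := lt_of_lt_of_le (by positivity) hP
  have hid : a = t_y * t - s * (-s * a + t_y * b) := by
    linear_combination t_y * hvy - a * hs2
  clear_value s sT a b
  clear hvy hvz hs hsT ha hb hy hz hw hv v w y z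
  rcases le_or_gt t 0 with hle | hgt
  · have h1 : t_y * t ≤ 0 := mul_nonpos_of_nonneg_of_nonpos hty0 hle
    have h2 : 0 < s * (-s * a + t_y * b) := mul_pos hspos hPpos
    linarith
  · -- t > 0 : t_y * t ≤ t/(2√d), and t < s * sT
    have h1 : t_y * t ≤ t / (2 * Real.sqrt d) := by
      rw [div_eq_mul_inv, mul_comm t]
      exact mul_le_mul_of_nonneg_right (by rw [div_eq_mul_inv, one_mul] at hty1; exact hty1) hgt.le
    have hts : t < s * sT := by
      have hsq : t ^ 2 < (s * sT) ^ 2 := by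
        rw [mul_pow, hs2, hT2]; nlinarith
      nlinarith [mul_pos hspos hTpos]
    have h2 : s * (sT / (2 * Real.sqrt d)) ≤ s * (-s * a + t_y * b) :=
      mul_le_mul_of_nonneg_left hP hspos.le
    have h3 : t / (2 * Real.sqrt d) < s * sT / (2 * Real.sqrt d) := by
      gcongr
    have h4 : s * sT / (2 * Real.sqrt d) = s * (sT / (2 * Real.sqrt d)) := by ring
    rw [h4] at h3
    linarith
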